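/- arXiv:2205.06954 — 2 statements merged into one kernel-verified Lean document; each statement's English description precedes it below -/
import Mathlib

section
/- Let σ ≥ 1 be an integer. For every ε > 0, ε · ∫_{[1,∞)^σ} (t₁ + t₂ + ⋯ + t_σ)^{-σ-ε} dt₁⋯dt_σ = σ^{-ε} / ∏_{k=1}^{σ-1} (k + ε). Consequently, lim_{ε→0⁺} ε · ∫_{[1,∞)^σ} (t₁ + ⋯ + t_σ)^{-σ-ε} dt = 1/(σ−1)!. -/
open MeasureTheory Real Set Filter
open scoped ENNReal

lemma my_restrict_pi (n : ℕ) :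
    (volume : Measure (Fin n → ℝ)).restrict (Set.univ.pi fun _ : Fin n => Set.Ici (1:ℝ))
      = Measure.pi fun _ : Fin n => (volume : Measure ℝ).restrict (Set.Ici (1:ℝ)) := by
  refine (Measure.pi_eq (μ := fun _ : Fin n => (volume : Measure ℝ).restrict (Set.Ici (1:ℝ))) fun s hs => ?_).symm
  rw [Measure.restrict_apply (MeasurableSet.univ_pi hs), ← Set.pi_inter_distrib,
    volume_pi, Measure.pi_pi]
  exact Finset.prod_congr rfl fun i _ =>
    (Measure.restrict_apply (hs i)).symm

lemma my_one_dim (c p : ℝ) (hc : 0 ≤ c) (hp : p < -1) :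
    ∫⁻ x in Set.Ici (1:ℝ), ENNReal.ofReal ((c + x) ^ p)
      = ENNReal.ofReal ((c + 1) ^ (p + 1) / (-(p + 1))) := by
  have hpos : (0:ℝ) < c + 1 := by linarith
  have hmap : (volume : Measure ℝ).restrict (Set.Ioi (c + 1))
      = ((volume : Measure ℝ).restrict (Set.Ioi (1:ℝ))).map (fun x => c + x) := by
    have h1 : (fun x : ℝ => c + x) ⁻¹' (Set.Ioi (c + 1)) = Set.Ioi (1:ℝ) := by
      ext x; simp [Set.mem_Ioi]
    calc (volume : Measure ℝ).restrict (Set.Ioi (c + 1))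
        = (Measure.map (fun x => c + x) volume).restrict (Set.Ioi (c + 1)) := by
          rw [(measurePreserving_add_left volume c).map_eq]
      _ = ((volume : Measure ℝ).restrict ((fun x : ℝ => c + x) ⁻¹' (Set.Ioi (c + 1)))).map
            (fun x => c + x) := Measure.restrict_map (measurable_const_add c)
            measurableSet_Ioi
      _ = _ := by rw [h1]
  have hmeas : Measurable fun y : ℝ => ENNReal.ofReal (y ^ p) := by measurability
  have key : ∫⁻ x in Set.Ioi (1:ℝ), ENNReal.ofReal ((c + x) ^ p)
      = ∫⁻ y in Set.Ioi (c + 1), ENNReal.ofReal (y ^ p) := by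
    rw [hmap, lintegral_map hmeas (measurable_const_add c)]
  rw [← restrict_Ioi_eq_restrict_Ici, key,
    ← ofReal_integral_eq_lintegral_ofReal
      (integrableOn_Ioi_rpow_of_lt hp hpos)
      ((ae_restrict_iff' measurableSet_Ioi).2 (ae_of_all _ fun x hx =>
        Real.rpow_nonneg (le_of_lt (hpos.trans hx)) p)),
    integral_Ioi_rpow_of_lt hp hpos]
  congr 1
  rw [neg_div, div_neg]

lemma my_key (s : ℝ) : ∀ n : ℕ, (n : ℝ) < s → ∀ a : ℝ, 0 ≤ a →
    ∫⁻ t : Fin n → ℝ, ENNReal.ofReal ((a + ∑ i, t i) ^ (-s))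
        ∂(Measure.pi fun _ : Fin n => (volume : Measure ℝ).restrict (Set.Ici (1:ℝ)))
      = ENNReal.ofReal ((a + n) ^ ((n:ℝ) - s) / ∏ k ∈ Finset.range n, (s - n + k))
  | 0, hs, a, ha => by
      simp [lintegral_const, Measure.pi_univ]
  | (n+1), hs, a, ha => by
      have hs' : (n : ℝ) < s := by push_cast at hs ⊢; linarith
      have hns : (n : ℝ) + 1 < s := by push_cast at hs; linarith
      set ν : Measure ℝ := (volume : Measure ℝ).restrict (Set.Ici (1:ℝ)) with hν
      set e := MeasurableEquiv.piFinSuccAbove (fun _ : Fin (n+1) => ℝ) 0 with he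
      have hmp : MeasurePreserving e (Measure.pi fun _ : Fin (n+1) => ν)
          (ν.prod (Measure.pi fun _ : Fin n => ν)) :=
        measurePreserving_piFinSuccAbove (fun _ : Fin (n+1) => ν) 0
      set G : ℝ × (Fin n → ℝ) → ℝ≥0∞ :=
        fun q => ENNReal.ofReal ((a + q.1 + ∑ i, q.2 i) ^ (-s)) with hG
      have hGmeas : Measurable G := by
        apply ENNReal.measurable_ofReal.comp
        exact ((measurable_const.add measurable_fst).add
          (Finset.measurable_sum Finset.univ fun i _ =>
            (measurable_pi_apply i).comp measurable_snd)).pow measurable_const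
      have hcomp : ∀ t : Fin (n+1) → ℝ,
          ENNReal.ofReal ((a + ∑ i, t i) ^ (-s)) = G (e t) := by
        intro t
        simp only [hG, he, MeasurableEquiv.piFinSuccAbove_apply]
        rw [Fin.sum_univ_succ t]
        norm_num [Fin.removeNth, Fin.succAbove]
        simp [Fin.tail]
        ring_nf
      calc ∫⁻ t, ENNReal.ofReal ((a + ∑ i, t i) ^ (-s))
              ∂(Measure.pi fun _ : Fin (n+1) => ν)
          = ∫⁻ t, G (e t) ∂(Measure.pi fun _ : Fin (n+1) => ν) := by
            exact lintegral_congr hcomp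
        _ = ∫⁻ q, G q ∂(ν.prod (Measure.pi fun _ : Fin n => ν)) :=
            hmp.lintegral_comp hGmeas
        _ = ∫⁻ x, ∫⁻ y, G (x, y) ∂(Measure.pi fun _ : Fin n => ν) ∂ν :=
            lintegral_prod G hGmeas.aemeasurable
        _ = ∫⁻ x, ENNReal.ofReal ((a + n + x) ^ ((n:ℝ) - s)
              / ∏ k ∈ Finset.range n, (s - n + k)) ∂ν := by
            refine lintegral_congr_ae ?_
            rw [hν]
            refine (ae_restrict_iff' measurableSet_Ici).2 (ae_of_all _ fun x hx => ?_)
            have hx1 : (1:ℝ) ≤ x := hx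
            have hax : 0 ≤ a + x := by linarith
            have := my_key s n hs' (a + x) hax
            simp only [hG]
            calc ∫⁻ y, ENNReal.ofReal ((a + x + ∑ i, y i) ^ (-s))
                  ∂(Measure.pi fun _ : Fin n => ν) = _ := this
              _ = _ := by rw [show a + x + (n:ℝ) = a + n + x by ring]
        _ = ENNReal.ofReal ((a + (n+1:ℕ)) ^ (((n+1:ℕ):ℝ) - s)
              / ∏ k ∈ Finset.range (n+1), (s - (n+1:ℕ) + k)) := by
            set P : ℝ := ∏ k ∈ Finset.range n, (s - n + k) with hP
            have hPpos : 0 < P := Finset.prod_pos fun k hk => by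
              have : (0:ℝ) ≤ k := Nat.cast_nonneg k
              linarith
            have expand : ∀ x : ℝ, ENNReal.ofReal ((a + n + x) ^ ((n:ℝ) - s) / P)
                = ENNReal.ofReal ((a + n + x) ^ ((n:ℝ) - s)) * ENNReal.ofReal P⁻¹ := by
              intro x
              rw [div_eq_mul_inv, ENNReal.ofReal_mul' (by positivity)]
            simp only [expand]
            rw [lintegral_mul_const _ (((measurable_const_add ((a:ℝ)+n)).pow
              measurable_const).ennreal_ofReal), hν,
              my_one_dim (a + n) ((n:ℝ) - s) (by positivity) (by linarith),
              ← ENNReal.ofReal_mul' (by positivity)]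
            congr 1
            have h1 : (n:ℝ) - s + 1 = ((n+1:ℕ):ℝ) - s := by push_cast; ring
            have h2 : -((n:ℝ) - s + 1) = s - ((n+1:ℕ):ℝ) := by push_cast; ring
            have h3 : ∏ k ∈ Finset.range (n+1), (s - (n+1:ℕ) + k)
                = P * (s - ((n+1:ℕ):ℝ)) := by
              rw [Finset.prod_range_succ' (fun k => s - ((n+1:ℕ):ℝ) + k), hP]
              push_cast
              congr 1
              · exact Finset.prod_congr rfl fun k _ => by push_cast; ring
              · ring
            rw [h1, h3]
            have h4 : a + (n:ℝ) + 1 = a + ((n+1:ℕ):ℝ) := by push_cast; ring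
            rw [h4, show -(((n+1:ℕ):ℝ) - s) = s - ((n+1:ℕ):ℝ) by ring]
            have hd : (0:ℝ) < s - ((n+1:ℕ):ℝ) := by push_cast; linarith
            field_simp

/-- For σ ≥ 1 and ε > 0,
ε · ∫_{[1,∞)^σ} (t₁ + ⋯ + t_σ)^{-σ-ε} dt = σ^{-ε} / ∏_{k=1}^{σ-1} (k + ε),
and consequently the limit as ε → 0⁺ of ε times the integral is 1/(σ−1)!. -/
theorem stmt_2 (σ : ℕ) (hσ : 1 ≤ σ) :
    (∀ ε : ℝ, 0 < ε →
      ε * ∫ t in Set.univ.pi (fun _ : Fin σ => Set.Ici (1:ℝ)),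
          (∑ i, t i) ^ (-(σ:ℝ) - ε)
        = (σ:ℝ) ^ (-ε) / ∏ k ∈ Finset.Icc 1 (σ - 1), ((k:ℝ) + ε)) ∧
    Filter.Tendsto
      (fun ε : ℝ => ε * ∫ t in Set.univ.pi (fun _ : Fin σ => Set.Ici (1:ℝ)),
          (∑ i, t i) ^ (-(σ:ℝ) - ε))
      (nhdsWithin 0 (Set.Ioi 0))
      (nhds (1 / (Nat.factorial (σ - 1) : ℝ))) := by
  obtain ⟨m, rfl⟩ : ∃ m, σ = m + 1 := ⟨σ - 1, (Nat.succ_pred_eq_of_pos hσ).symm⟩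
  set σ' := m + 1 with hσ'
  have hσpos : (0:ℝ) < σ' := by positivity
  have hm : σ' - 1 = m := rfl
  have part1 : ∀ ε : ℝ, 0 < ε →
      ε * ∫ t in Set.univ.pi (fun _ : Fin σ' => Set.Ici (1:ℝ)),
          (∑ i, t i) ^ (-(σ':ℝ) - ε)
        = (σ':ℝ) ^ (-ε) / ∏ k ∈ Finset.Icc 1 (σ' - 1), ((k:ℝ) + ε) := by
    intro ε hε
    have hs : (σ' : ℝ) < (σ':ℝ) + ε := by linarith
    have hk := my_key ((σ':ℝ) + ε) σ' hs 0 le_rfl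
    simp only [zero_add] at hk
    have hexp : ∀ t : Fin σ' → ℝ, (∑ i, t i) ^ (-((σ':ℝ) + ε))
        = (∑ i, t i) ^ (-(σ':ℝ) - ε) := by
      intro t; congr 1; ring
    have hmeas : Measurable fun t : Fin σ' → ℝ => (∑ i, t i) ^ (-(σ':ℝ) - ε) := by
      exact (Finset.measurable_sum Finset.univ fun i _ =>
        measurable_pi_apply i).pow measurable_const
    have hnn : 0 ≤ᵐ[(volume : Measure (Fin σ' → ℝ)).restrict
        (Set.univ.pi fun _ : Fin σ' => Set.Ici (1:ℝ))]
        fun t => (∑ i, t i) ^ (-(σ':ℝ) - ε) := by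
      refine (ae_restrict_iff' (MeasurableSet.univ_pi fun _ => measurableSet_Ici)).2
        (ae_of_all _ fun t ht => ?_)
      have h1 : (0:ℝ) ≤ ∑ i, t i := by
        have : ∀ i : Fin σ', (0:ℝ) ≤ t i := fun i => le_trans zero_le_one
          (ht i (Set.mem_univ i))
        exact Finset.sum_nonneg fun i _ => this i
      exact Real.rpow_nonneg h1 _
    rw [integral_eq_lintegral_of_nonneg_ae hnn hmeas.aestronglyMeasurable.restrict,
      my_restrict_pi]
    simp only [hexp] at hk
    rw [hk, ENNReal.toReal_ofReal]
    · -- arithmetic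
      have hval : ((σ':ℝ)) ^ ((σ':ℝ) - ((σ':ℝ) + ε)) = (σ':ℝ) ^ (-ε) := by
        congr 1; ring
      have hprod : ∏ k ∈ Finset.range σ', ((σ':ℝ) + ε - σ' + k)
          = (∏ k ∈ Finset.Icc 1 (σ' - 1), ((k:ℝ) + ε)) * ε := by
        rw [hσ', Finset.prod_range_succ' (fun k => (σ':ℝ) + ε - σ' + k)]
        have : ∏ k ∈ Finset.Icc 1 m, ((k:ℝ) + ε)
            = ∏ k ∈ Finset.range m, ((σ':ℝ) + ε - σ' + ((k:ℕ)+1)) := by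
          rw [← Finset.Ico_add_one_right_eq_Icc, Finset.prod_Ico_eq_prod_range]
          exact Finset.prod_congr rfl fun k _ => by push_cast; ring
        rw [hm, this]
        push_cast
        ring
      rw [hval, hprod]
      have hQpos : 0 < ∏ k ∈ Finset.Icc 1 (σ' - 1), ((k:ℝ) + ε) :=
        Finset.prod_pos fun k hk => by positivity
      field_simp
    · have hnum : (0:ℝ) ≤ ((σ':ℝ)) ^ ((σ':ℝ) - ((σ':ℝ) + ε)) :=
        Real.rpow_nonneg hσpos.le _
      have hden : (0:ℝ) ≤ ∏ k ∈ Finset.range σ', ((σ':ℝ) + ε - σ' + k) :=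
        Finset.prod_nonneg fun k hk => by
          have : (0:ℝ) ≤ k := Nat.cast_nonneg k
          linarith
      positivity
  refine ⟨part1, ?_⟩
  have hfact : (∏ k ∈ Finset.Icc 1 (σ' - 1), ((k:ℝ) + 0))
      = (Nat.factorial (σ' - 1) : ℝ) := by
    norm_num
    rw [← Nat.cast_prod]
    congr 1
    rw [← Finset.Ico_add_one_right_eq_Icc, Finset.prod_Ico_eq_prod_range]
    rw [← Finset.prod_range_add_one_eq_factorial]
    exact Finset.prod_congr rfl fun k _ => by ring
  have hfactpos : (0:ℝ) < (Nat.factorial (σ' - 1) : ℝ) := by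
    exact_mod_cast Nat.factorial_pos _
  have hcont : ContinuousAt (fun ε : ℝ =>
      (σ':ℝ) ^ (-ε) / ∏ k ∈ Finset.Icc 1 (σ' - 1), ((k:ℝ) + ε)) 0 := by
    apply ContinuousAt.div
    · exact (Real.continuousAt_const_rpow (ne_of_gt hσpos)).comp (continuousAt_neg)
    · exact (continuous_finset_prod _ fun k _ =>
        continuous_const.add continuous_id).continuousAt
    · rw [hfact]; exact ne_of_gt hfactpos
  have hval0 : (σ':ℝ) ^ (-(0:ℝ)) / (∏ k ∈ Finset.Icc 1 (σ' - 1), ((k:ℝ) + 0))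
      = 1 / (Nat.factorial (σ' - 1) : ℝ) := by
    rw [hfact, neg_zero, Real.rpow_zero]
  have htend : Filter.Tendsto (fun ε : ℝ =>
      (σ':ℝ) ^ (-ε) / ∏ k ∈ Finset.Icc 1 (σ' - 1), ((k:ℝ) + ε))
      (nhdsWithin 0 (Set.Ioi 0)) (nhds (1 / (Nat.factorial (σ' - 1) : ℝ))) := by
    have := hcont.tendsto
    rw [hval0] at this
    exact this.mono_left nhdsWithin_le_nhds
  exact htend.congr' (Filter.eventuallyEq_of_mem self_mem_nhdsWithin
    fun ε hε => (part1 ε hε).symm)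
end

section
/- Let h: [1,∞)² → ℝ be a bounded measurable function such that h(t₁,t₂) → L as min(t₁,t₂) → ∞. Then lim_{ε→0⁺} ε · ∫_{[1,∞)²} h(t₁,t₂) · (t₁ + t₂)^{-2-ε} dt₁ dt₂ = L. -/
open MeasureTheory Real Set Filter Topology

private lemma aux_hasDeriv {c p : ℝ} (hc : 0 < c) (hp : p < -1) :
    ∀ x ∈ Ici (1:ℝ), HasDerivAt (fun t : ℝ => (c + t) ^ (p + 1) / (p + 1)) ((c + x) ^ p) x := by
  intro x hx
  have hx0 : (0:ℝ) < c + x := by have := hx.out; linarith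
  have h1 : HasDerivAt (fun t : ℝ => c + t) 1 x := by
    simpa using (hasDerivAt_id x).const_add c
  have h2 := (h1.rpow_const (p := p + 1) (Or.inl hx0.ne')).div_const (p + 1)
  have hne : p + 1 ≠ 0 := ne_of_lt (by linarith)
  refine h2.congr_deriv ?_
  rw [show p + 1 - 1 = p by ring]
  field_simp

private lemma aux_tendsto {c p : ℝ} (hp : p < -1) :
    Tendsto (fun t : ℝ => (c + t) ^ (p + 1) / (p + 1)) atTop (𝓝 (0 / (p + 1))) := by
  apply Tendsto.div_const
  have h0 : (0:ℝ) < -(p + 1) := by linarith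
  have h1 : Tendsto (fun t : ℝ => c + t) atTop atTop :=
    tendsto_atTop_add_const_left atTop c tendsto_id
  have := (tendsto_rpow_neg_atTop h0).comp h1
  simpa [Function.comp_def, neg_neg] using this

private lemma aux_integrableOn {c p : ℝ} (hc : 0 < c) (hp : p < -1) :
    IntegrableOn (fun t : ℝ => (c + t) ^ p) (Ici (1:ℝ)) := by
  rw [integrableOn_Ici_iff_integrableOn_Ioi]
  exact integrableOn_Ioi_deriv_of_nonneg' (aux_hasDeriv hc hp)
    (fun x hx => rpow_nonneg (by have := hx.out; linarith) p) (aux_tendsto hp)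

private lemma aux_integral {c p : ℝ} (hc : 0 < c) (hp : p < -1) :
    ∫ t in Ici (1:ℝ), (c + t) ^ p = (c + 1) ^ (p + 1) / (-(p + 1)) := by
  rw [integral_Ici_eq_integral_Ioi,
    integral_Ioi_of_hasDerivAt_of_tendsto' (aux_hasDeriv hc hp)
      ((integrableOn_Ici_iff_integrableOn_Ioi).mp (aux_integrableOn hc hp)) (aux_tendsto hp)]
  rw [zero_div, zero_sub, div_neg]

private lemma aux_contOn (c : ℝ) {s : Set (ℝ × ℝ)} (hs : s ⊆ Ici (1:ℝ) ×ˢ Ici (1:ℝ)) :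
    ContinuousOn (fun p : ℝ × ℝ => (p.1 + p.2) ^ c) s := by
  apply ContinuousOn.rpow_const (Continuous.continuousOn (by fun_prop))
  intro p hp
  have h1 : (1:ℝ) ≤ p.1 := (hs hp).1
  have h2 : (1:ℝ) ≤ p.2 := (hs hp).2
  exact Or.inl (by positivity)

private lemma aux_w_integrableOn {ε : ℝ} (hε : 0 < ε) :
    IntegrableOn (fun p : ℝ × ℝ => (p.1 + p.2) ^ (-2 - ε)) (Ici (1:ℝ) ×ˢ Ici (1:ℝ)) := by
  set q : ℝ := (-2 - ε) / 2 with hq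
  have hq1 : q < -1 := by rw [hq]; linarith
  have h1 : IntegrableOn (fun t : ℝ => t ^ q) (Ici (1:ℝ)) := by
    rw [integrableOn_Ici_iff_integrableOn_Ioi]
    exact integrableOn_Ioi_rpow_of_lt hq1 one_pos
  have hg : IntegrableOn (fun p : ℝ × ℝ => p.1 ^ q * p.2 ^ q) (Ici (1:ℝ) ×ˢ Ici (1:ℝ)) := by
    rw [IntegrableOn, Measure.volume_eq_prod, ← Measure.prod_restrict]
    exact h1.mul_prod h1
  refine hg.mono' ((aux_contOn (-2 - ε) subset_rfl).aestronglyMeasurable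
    (measurableSet_Ici.prod measurableSet_Ici)) ?_
  filter_upwards [ae_restrict_mem (measurableSet_Ici.prod measurableSet_Ici)] with p hp
  have hx1 : (1:ℝ) ≤ p.1 := hp.1
  have hy1 : (1:ℝ) ≤ p.2 := hp.2
  have hxy : (0:ℝ) < p.1 + p.2 := by linarith
  rw [Real.norm_eq_abs, abs_of_nonneg (rpow_nonneg hxy.le _)]
  have key : p.1 * p.2 ≤ (p.1 + p.2) ^ (2:ℝ) := by
    rw [show ((2:ℝ)) = ((2:ℕ):ℝ) by norm_num, rpow_natCast]
    nlinarith
  calc (p.1 + p.2) ^ (-2 - ε) = ((p.1 + p.2) ^ (2:ℝ)) ^ q := by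
        rw [← rpow_mul hxy.le]; congr 1; rw [hq]; ring
    _ ≤ (p.1 * p.2) ^ q := rpow_le_rpow_of_nonpos (by nlinarith) key (by rw [hq]; linarith)
    _ = p.1 ^ q * p.2 ^ q := mul_rpow (by linarith) (by linarith)

private lemma aux_w_integral {ε : ℝ} (hε : 0 < ε) :
    ∫ p in Ici (1:ℝ) ×ˢ Ici (1:ℝ), (p.1 + p.2) ^ (-2 - ε) = 2 ^ (-ε) / (ε * (1 + ε)) := by
  have hint := aux_w_integrableOn hε
  rw [IntegrableOn, Measure.volume_eq_prod] at hint
  rw [Measure.volume_eq_prod, setIntegral_prod _ hint]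
  have inner : ∀ x ∈ Ici (1:ℝ),
      (∫ y in Ici (1:ℝ), (x + y) ^ (-2 - ε)) = (1 + ε)⁻¹ * (x + 1) ^ (-1 - ε) := by
    intro x hx
    have h := aux_integral (c := x) (p := -2 - ε) (by linarith [hx.out]) (by linarith)
    rw [show (-2 - ε) + 1 = -1 - ε by ring, show -(-1 - ε) = 1 + ε by ring] at h
    rw [h, div_eq_inv_mul]
  rw [setIntegral_congr_fun measurableSet_Ici inner, integral_const_mul]
  have outer : ∀ x ∈ Ici (1:ℝ), (x + 1 : ℝ) ^ (-1 - ε) = (1 + x) ^ (-1 - ε) := by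
    intro x _; rw [add_comm]
  rw [setIntegral_congr_fun measurableSet_Ici outer]
  have h2 := aux_integral (c := (1:ℝ)) (p := -1 - ε) one_pos (by linarith)
  rw [show (-1 - ε) + 1 = -ε by ring, show - -ε = ε by ring] at h2
  rw [h2]
  rw [show (1:ℝ) + 1 = 2 by norm_num, div_eq_mul_inv, div_eq_mul_inv, mul_inv]
  ring

/-- If h : [1,∞)² → ℝ is bounded measurable and h(t₁,t₂) → L as min(t₁,t₂) → ∞, then
lim_{ε→0⁺} ε · ∫_{[1,∞)²} h(t₁,t₂) (t₁+t₂)^{-2-ε} dt₁dt₂ = L. -/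
theorem stmt_5 (h : ℝ × ℝ → ℝ) (L : ℝ) (C : ℝ)
    (hmeas : Measurable h)
    (hbdd : ∀ p : ℝ × ℝ, 1 ≤ p.1 → 1 ≤ p.2 → |h p| ≤ C)
    (hlim : ∀ δ : ℝ, 0 < δ → ∃ T : ℝ, ∀ p : ℝ × ℝ,
      1 ≤ p.1 → 1 ≤ p.2 → T ≤ min p.1 p.2 → |h p - L| < δ) :
    Filter.Tendsto
      (fun ε : ℝ => ε * ∫ p in (Set.Ici (1:ℝ)) ×ˢ (Set.Ici (1:ℝ)),
        h p * (p.1 + p.2) ^ (-2 - ε))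
      (nhdsWithin 0 (Set.Ioi 0)) (nhds L) := by
  have hSmeas : MeasurableSet (Ici (1:ℝ) ×ˢ Ici (1:ℝ)) :=
    measurableSet_Ici.prod measurableSet_Ici
  have hC0 : 0 ≤ C := le_trans (abs_nonneg _) (hbdd (1, 1) le_rfl le_rfl)
  rw [Metric.tendsto_nhdsWithin_nhds]
  intro δ hδ
  obtain ⟨T₀, hT₀⟩ := hlim (δ / 4) (by linarith)
  set T : ℝ := max T₀ 1 with hTdef
  have hT1 : (1:ℝ) ≤ T := le_max_right _ _
  set s1 : Set (ℝ × ℝ) := Ico (1:ℝ) T ×ˢ Ici (1:ℝ) with hs1def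
  set s2 : Set (ℝ × ℝ) := Ici T ×ˢ Ico (1:ℝ) T with hs2def
  set good : Set (ℝ × ℝ) := Ici T ×ˢ Ici T with hgooddef
  have hs1meas : MeasurableSet s1 := measurableSet_Ico.prod measurableSet_Ici
  have hs2meas : MeasurableSet s2 := measurableSet_Ici.prod measurableSet_Ico
  have hgoodmeas : MeasurableSet good := measurableSet_Ici.prod measurableSet_Ici
  have hs1sub : s1 ⊆ Ici (1:ℝ) ×ˢ Ici (1:ℝ) := by
    rintro ⟨x, y⟩ ⟨hx, hy⟩; exact ⟨hx.1, hy⟩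
  have hs2sub : s2 ⊆ Ici (1:ℝ) ×ˢ Ici (1:ℝ) := by
    rintro ⟨x, y⟩ ⟨hx, hy⟩; exact ⟨le_trans hT1 hx, hy.1⟩
  have hgsub : good ⊆ Ici (1:ℝ) ×ˢ Ici (1:ℝ) := by
    rintro ⟨x, y⟩ ⟨hx, hy⟩; exact ⟨le_trans hT1 hx, le_trans hT1 hy⟩
  have hsplit : (Ici (1:ℝ) ×ˢ Ici (1:ℝ)) = s1 ∪ (s2 ∪ good) := by
    ext p
    simp only [hs1def, hs2def, hgooddef, mem_prod, mem_Ici, mem_Ico, mem_union]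
    constructor
    · rintro ⟨h1, h2⟩
      rcases lt_or_ge p.1 T with hx | hx
      · exact Or.inl ⟨⟨h1, hx⟩, h2⟩
      · rcases lt_or_ge p.2 T with hy | hy
        · exact Or.inr (Or.inl ⟨hx, h2, hy⟩)
        · exact Or.inr (Or.inr ⟨hx, hy⟩)
    · rintro (⟨⟨h1, _⟩, h2⟩ | ⟨hx, h2, _⟩ | ⟨hx, hy⟩)
      · exact ⟨h1, h2⟩
      · exact ⟨le_trans hT1 hx, h2⟩
      · exact ⟨le_trans hT1 hx, le_trans hT1 hy⟩
  have hd1 : Disjoint s1 (s2 ∪ good) := by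
    rw [Set.disjoint_left]
    rintro p hp (hq | hq)
    · exact (not_le.mpr hp.1.2) hq.1
    · exact (not_le.mpr hp.1.2) hq.1
  have hd2 : Disjoint s2 good := by
    rw [Set.disjoint_left]
    rintro p hp hq
    exact (not_le.mpr hp.2.2) hq.2
  -- integrable bounds on strips
  have hconst1 : Integrable (fun _ : ℝ => (1:ℝ)) (volume.restrict (Ico (1:ℝ) T)) :=
    integrable_const_iff.mpr (Or.inr (isFiniteMeasure_restrict.mpr measure_Ico_lt_top.ne))
  have hb1int : IntegrableOn (fun p : ℝ × ℝ => (1 + p.2) ^ (-2:ℝ)) s1 := by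
    rw [hs1def, IntegrableOn, Measure.volume_eq_prod, ← Measure.prod_restrict]
    have hg2 : Integrable (fun y : ℝ => (1 + y) ^ (-2:ℝ)) (volume.restrict (Ici (1:ℝ))) :=
      aux_integrableOn one_pos (by norm_num)
    simpa using hconst1.mul_prod hg2
  have hb2int : IntegrableOn (fun p : ℝ × ℝ => (1 + p.1) ^ (-2:ℝ)) s2 := by
    rw [hs2def, IntegrableOn, Measure.volume_eq_prod, ← Measure.prod_restrict]
    have hg2 : Integrable (fun y : ℝ => (1 + y) ^ (-2:ℝ)) (volume.restrict (Ici T)) :=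
      (aux_integrableOn one_pos (by norm_num)).mono_set (Ici_subset_Ici.mpr hT1)
    simpa using hg2.mul_prod hconst1
  obtain ⟨M₁, hM₁def⟩ : ∃ x : ℝ, x = ∫ p in s1, (1 + p.2) ^ (-2:ℝ) := ⟨_, rfl⟩
  obtain ⟨M₂, hM₂def⟩ : ∃ x : ℝ, x = ∫ p in s2, (1 + p.1) ^ (-2:ℝ) := ⟨_, rfl⟩
  have hM₁0 : 0 ≤ M₁ := by
    rw [hM₁def]
    exact setIntegral_nonneg hs1meas
      (fun p hp => rpow_nonneg (by have := hp.2.out; linarith) _)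
  have hM₂0 : 0 ≤ M₂ := by
    rw [hM₂def]
    exact setIntegral_nonneg hs2meas
      (fun p hp => rpow_nonneg (by have := hp.1.out; linarith) _)
  obtain ⟨K, hKdef⟩ : ∃ x : ℝ, x = C + |L| := ⟨_, rfl⟩
  have hK0 : 0 ≤ K := by rw [hKdef]; positivity
  obtain ⟨D, hDdef⟩ : ∃ x : ℝ, x = K * (M₁ + M₂) + 2 * |L| := ⟨_, rfl⟩
  have hD0 : 0 ≤ D := by
    rw [hDdef]
    exact add_nonneg (mul_nonneg hK0 (add_nonneg hM₁0 hM₂0)) (by positivity)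
  refine ⟨min 1 (δ / (4 * (D + 1))), lt_min one_pos (div_pos hδ (by linarith)), ?_⟩
  intro ε hε hdist
  have hε0 : 0 < ε := hε
  rw [Real.dist_eq, sub_zero, abs_of_pos hε0] at hdist
  have hε1 : ε ≤ 1 := le_of_lt (lt_of_lt_of_le hdist (min_le_left _ _))
  have hεD : ε < δ / (4 * (D + 1)) := lt_of_lt_of_le hdist (min_le_right _ _)
  -- per-ε facts
  have hwint : IntegrableOn (fun p : ℝ × ℝ => (p.1 + p.2) ^ (-2 - ε)) (Ici (1:ℝ) ×ˢ Ici (1:ℝ)) :=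
    aux_w_integrableOn hε0
  have hwval := aux_w_integral hε0
  have hwnonneg : ∀ p ∈ Ici (1:ℝ) ×ˢ Ici (1:ℝ), 0 ≤ (p.1 + p.2) ^ (-2 - ε) := by
    intro p hp
    have h1 : (1:ℝ) ≤ p.1 := hp.1
    have h2 : (1:ℝ) ≤ p.2 := hp.2
    exact rpow_nonneg (by linarith) _
  set f : ℝ × ℝ → ℝ := fun p => (h p - L) * (p.1 + p.2) ^ (-2 - ε) with hfdef
  have hfmeas : AEStronglyMeasurable f (volume.restrict (Ici (1:ℝ) ×ˢ Ici (1:ℝ))) :=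
    ((hmeas.sub measurable_const).aestronglyMeasurable).mul
      ((aux_contOn (-2 - ε) subset_rfl).aestronglyMeasurable hSmeas)
  have habs : ∀ p : ℝ × ℝ, 1 ≤ p.1 → 1 ≤ p.2 → |h p - L| ≤ K := by
    intro p h1 h2
    have h3 := hbdd p h1 h2
    have h4 := abs_sub (h p) L
    rw [hKdef]
    linarith
  have hfint : IntegrableOn f (Ici (1:ℝ) ×ˢ Ici (1:ℝ)) := by
    refine (hwint.const_mul K).mono' hfmeas ?_
    filter_upwards [ae_restrict_mem hSmeas] with p hp
    have hw0 := hwnonneg p hp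
    rw [hfdef]
    simp only [Real.norm_eq_abs, abs_mul, abs_of_nonneg hw0]
    exact mul_le_mul_of_nonneg_right (habs p hp.1 hp.2) hw0
  have hfn : IntegrableOn (fun p => ‖f p‖) (Ici (1:ℝ) ×ˢ Ici (1:ℝ)) := hfint.norm
  have hfn1 : IntegrableOn (fun p => ‖f p‖) s1 := hfn.mono_set hs1sub
  have hfn2 : IntegrableOn (fun p => ‖f p‖) s2 := hfn.mono_set hs2sub
  have hfng : IntegrableOn (fun p => ‖f p‖) good := hfn.mono_set hgsub
  have hnormsplit : ∫ p in Ici (1:ℝ) ×ˢ Ici (1:ℝ), ‖f p‖ =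
      (∫ p in s1, ‖f p‖) + ((∫ p in s2, ‖f p‖) + ∫ p in good, ‖f p‖) := by
    rw [hsplit, setIntegral_union hd1 (hs2meas.union hgoodmeas) hfn1 (hfn2.union hfng),
      setIntegral_union hd2 hgoodmeas hfn2 hfng]
  have hstrip1 : ∫ p in s1, ‖f p‖ ≤ K * M₁ := by
    have hle : ∫ p in s1, ‖f p‖ ≤ ∫ p in s1, K * (1 + p.2) ^ (-2:ℝ) := by
      apply setIntegral_mono_on hfn1 (hb1int.const_mul K) hs1meas
      intro p hp
      have hpS : p ∈ Ici (1:ℝ) ×ˢ Ici (1:ℝ) := hs1sub hp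
      have h1 : (1:ℝ) ≤ p.1 := hpS.1
      have h2 : (1:ℝ) ≤ p.2 := hpS.2
      have hw0 := hwnonneg p hpS
      rw [hfdef]
      simp only [Real.norm_eq_abs, abs_mul, abs_of_nonneg hw0]
      have hww : (p.1 + p.2) ^ (-2 - ε) ≤ (1 + p.2) ^ (-2:ℝ) :=
        calc (p.1 + p.2) ^ (-2 - ε) ≤ (p.1 + p.2) ^ (-2:ℝ) :=
              rpow_le_rpow_of_exponent_le (by linarith) (by linarith)
          _ ≤ (1 + p.2) ^ (-2:ℝ) :=
              rpow_le_rpow_of_nonpos (by linarith) (by linarith) (by norm_num)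
      exact mul_le_mul (habs p h1 h2) hww hw0 hK0
    calc ∫ p in s1, ‖f p‖ ≤ ∫ p in s1, K * (1 + p.2) ^ (-2:ℝ) := hle
      _ = K * M₁ := by rw [integral_const_mul, hM₁def]
  have hstrip2 : ∫ p in s2, ‖f p‖ ≤ K * M₂ := by
    have hle : ∫ p in s2, ‖f p‖ ≤ ∫ p in s2, K * (1 + p.1) ^ (-2:ℝ) := by
      apply setIntegral_mono_on hfn2 (hb2int.const_mul K) hs2meas
      intro p hp
      have hpS : p ∈ Ici (1:ℝ) ×ˢ Ici (1:ℝ) := hs2sub hp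
      have h1 : (1:ℝ) ≤ p.1 := hpS.1
      have h2 : (1:ℝ) ≤ p.2 := hpS.2
      have hw0 := hwnonneg p hpS
      rw [hfdef]
      simp only [Real.norm_eq_abs, abs_mul, abs_of_nonneg hw0]
      have hww : (p.1 + p.2) ^ (-2 - ε) ≤ (1 + p.1) ^ (-2:ℝ) :=
        calc (p.1 + p.2) ^ (-2 - ε) ≤ (p.1 + p.2) ^ (-2:ℝ) :=
              rpow_le_rpow_of_exponent_le (by linarith) (by linarith)
          _ ≤ (1 + p.1) ^ (-2:ℝ) :=
              rpow_le_rpow_of_nonpos (by linarith) (by linarith) (by norm_num)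
      exact mul_le_mul (habs p h1 h2) hww hw0 hK0
    calc ∫ p in s2, ‖f p‖ ≤ ∫ p in s2, K * (1 + p.1) ^ (-2:ℝ) := hle
      _ = K * M₂ := by rw [integral_const_mul, hM₂def]
  have hgoodb : ∫ p in good, ‖f p‖ ≤ (δ / 4) * (2 ^ (-ε) / (ε * (1 + ε))) := by
    have step1 : ∫ p in good, ‖f p‖ ≤ ∫ p in good, (δ / 4) * (p.1 + p.2) ^ (-2 - ε) := by
      apply setIntegral_mono_on hfng ((hwint.mono_set hgsub).const_mul _) hgoodmeas
      intro p hp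
      have hpS : p ∈ Ici (1:ℝ) ×ˢ Ici (1:ℝ) := hgsub hp
      have hw0 := hwnonneg p hpS
      rw [hfdef]
      simp only [Real.norm_eq_abs, abs_mul, abs_of_nonneg hw0]
      refine mul_le_mul_of_nonneg_right (le_of_lt (hT₀ p hpS.1 hpS.2 ?_)) hw0
      exact le_min (le_trans (le_max_left _ _) hp.1) (le_trans (le_max_left _ _) hp.2)
    refine le_trans step1 ?_
    rw [integral_const_mul]
    refine mul_le_mul_of_nonneg_left ?_ (by linarith)
    rw [← hwval]
    refine setIntegral_mono_set hwint ?_ (HasSubset.Subset.eventuallyLE hgsub)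
    filter_upwards [ae_restrict_mem hSmeas] with p hp using hwnonneg p hp
  have hIdecomp : (∫ p in Ici (1:ℝ) ×ˢ Ici (1:ℝ), h p * (p.1 + p.2) ^ (-2 - ε))
      = (∫ p in Ici (1:ℝ) ×ˢ Ici (1:ℝ), f p) + L * (2 ^ (-ε) / (ε * (1 + ε))) := by
    have heq : ∀ p : ℝ × ℝ, h p * (p.1 + p.2) ^ (-2 - ε)
        = f p + L * (p.1 + p.2) ^ (-2 - ε) := by
      intro p; rw [hfdef]; ring
    rw [integral_congr_ae (ae_of_all _ heq), integral_add hfint (hwint.const_mul L),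
      integral_const_mul, hwval]
  -- numeric bounds
  have h2le : (2:ℝ) ^ (-ε) ≤ 1 := rpow_le_one_of_one_le_of_nonpos one_le_two (by linarith)
  have h2ge : 1 - ε ≤ (2:ℝ) ^ (-ε) := by
    have hlog : Real.log 2 ≤ 1 := by
      have := Real.log_le_sub_one_of_pos (by norm_num : (0:ℝ) < 2); linarith
    have hlog0 : 0 ≤ Real.log 2 := Real.log_nonneg one_le_two
    have hexp := Real.add_one_le_exp (Real.log 2 * (-ε))
    rw [Real.rpow_def_of_pos (by norm_num : (0:ℝ) < 2)]
    have hm := mul_le_mul_of_nonneg_left hlog hε0.le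
    linarith
  have hfrac1 : (2:ℝ) ^ (-ε) / (1 + ε) ≤ 1 := by
    rw [div_le_one (by linarith)]; linarith
  have hfrac2 : 1 - 2 * ε ≤ (2:ℝ) ^ (-ε) / (1 + ε) := by
    rw [le_div_iff₀ (by linarith)]
    have hexpand : (1 - 2 * ε) * (1 + ε) = 1 - ε - 2 * ε ^ 2 := by ring
    have hsq := sq_nonneg ε
    linarith
  have hεw : ε * ((2:ℝ) ^ (-ε) / (ε * (1 + ε))) = (2:ℝ) ^ (-ε) / (1 + ε) := by
    rw [mul_div_assoc', mul_div_mul_left _ _ hε0.ne']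
  have hA : ‖∫ p in Ici (1:ℝ) ×ˢ Ici (1:ℝ), f p‖
      ≤ K * M₁ + K * M₂ + (δ / 4) * (2 ^ (-ε) / (ε * (1 + ε))) := by
    refine le_trans (norm_integral_le_integral_norm f) ?_
    rw [hnormsplit]
    exact le_trans (add_le_add hstrip1 (add_le_add hstrip2 hgoodb))
      (le_of_eq (add_assoc _ _ _).symm)
  rw [Real.dist_eq, hIdecomp]
  have hkey : ε * ((∫ p in Ici (1:ℝ) ×ˢ Ici (1:ℝ), f p) + L * (2 ^ (-ε) / (ε * (1 + ε)))) - L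
      = ε * (∫ p in Ici (1:ℝ) ×ˢ Ici (1:ℝ), f p) + (L * (2 ^ (-ε) / (1 + ε)) - L) := by
    rw [mul_add, show ε * (L * (2 ^ (-ε) / (ε * (1 + ε)))) =
      L * (ε * (2 ^ (-ε) / (ε * (1 + ε)))) by ring, hεw]
    ring
  rw [hkey]
  have hterm1 : |ε * (∫ p in Ici (1:ℝ) ×ˢ Ici (1:ℝ), f p)| ≤ ε * K * (M₁ + M₂) + δ / 4 := by
    rw [abs_mul, abs_of_pos hε0, ← Real.norm_eq_abs]
    have := mul_le_mul_of_nonneg_left hA hε0.le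
    have hmid : ε * ((δ / 4) * (2 ^ (-ε) / (ε * (1 + ε)))) = (δ / 4) * (2 ^ (-ε) / (1 + ε)) := by
      rw [show ε * ((δ / 4) * (2 ^ (-ε) / (ε * (1 + ε))))
        = (δ / 4) * (ε * (2 ^ (-ε) / (ε * (1 + ε)))) by ring, hεw]
    have hmid2 : (δ / 4) * (2 ^ (-ε) / (1 + ε)) ≤ δ / 4 := by
      have h4 : 0 ≤ δ / 4 := by linarith
      calc (δ / 4) * (2 ^ (-ε) / (1 + ε)) ≤ (δ / 4) * 1 :=
            mul_le_mul_of_nonneg_left hfrac1 h4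
        _ = δ / 4 := mul_one _
    calc ε * ‖∫ p in Ici (1:ℝ) ×ˢ Ici (1:ℝ), f p‖
        ≤ ε * (K * M₁ + K * M₂ + (δ / 4) * (2 ^ (-ε) / (ε * (1 + ε)))) := this
      _ = ε * K * (M₁ + M₂) + ε * ((δ / 4) * (2 ^ (-ε) / (ε * (1 + ε)))) := by ring
      _ ≤ ε * K * (M₁ + M₂) + δ / 4 := by rw [hmid]; exact add_le_add le_rfl hmid2
  have hterm2 : |L * (2 ^ (-ε) / (1 + ε)) - L| ≤ |L| * (2 * ε) := by
    rw [show L * (2 ^ (-ε) / (1 + ε)) - L = L * (2 ^ (-ε) / (1 + ε) - 1) by ring, abs_mul]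
    refine mul_le_mul_of_nonneg_left ?_ (abs_nonneg L)
    rw [abs_le]
    constructor <;> linarith
  have hDb : ε * D < δ / 4 := by
    rw [lt_div_iff₀ (by positivity : (0:ℝ) < 4 * (D + 1))] at hεD
    have hexpand : ε * (4 * (D + 1)) = 4 * (ε * D) + 4 * ε := by ring
    linarith
  calc |ε * (∫ p in Ici (1:ℝ) ×ˢ Ici (1:ℝ), f p) + (L * (2 ^ (-ε) / (1 + ε)) - L)|
      ≤ |ε * (∫ p in Ici (1:ℝ) ×ˢ Ici (1:ℝ), f p)| + |L * (2 ^ (-ε) / (1 + ε)) - L| :=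
        abs_add_le _ _
    _ ≤ (ε * K * (M₁ + M₂) + δ / 4) + |L| * (2 * ε) := add_le_add hterm1 hterm2
    _ = ε * D + δ / 4 := by rw [hDdef]; ring
    _ < δ / 4 + δ / 4 := by linarith
    _ < δ := by linarith
end
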